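/- Let (𝒟_m)_{m∈ℕ} be a limit-conforming sequence of gradient discretisations, and for each m let u_m ∈ X_{𝒟_m} be such that the sequence (‖u_m‖_{𝒟_m})_{m∈ℕ} is bounded. Then there exists u ∈ W_G such that, along a subsequence as m → ∞, (P_{𝒟_m} u_m) converges weakly in L to u and (G_{𝒟_m} u_m) converges weakly in 𝐋 to Gu. -/

import Mathlib

open NormedSpace Filter Topology

noncomputable section

variable {L Lv : Type*} [NormedAddCommGroup L] [NormedSpace ℝ L]
  [NormedAddCommGroup Lv] [NormedSpace ℝ Lv]

/-- The seminorm `|u|_{L,V} = sup_{μ ∈ V \ {0}} |⟨μ,u⟩| / ‖μ‖` (equal to `0` when `V = {0}`,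
since `sSup ∅ = 0` in `ℝ`). -/
noncomputable def semV (V : Submodule ℝ (StrongDual ℝ L)) (u : L) : ℝ :=
  sSup ((fun μ : StrongDual ℝ L => |μ u| / ‖μ‖) '' {μ : StrongDual ℝ L | μ ∈ V ∧ μ ≠ 0})

section RpowAux

lemma pnorm_nonneg {p a b : ℝ} (ha : 0 ≤ a) (hb : 0 ≤ b) : 0 ≤ (a ^ p + b ^ p) ^ (1 / p) :=
  Real.rpow_nonneg (add_nonneg (Real.rpow_nonneg ha _) (Real.rpow_nonneg hb _)) _

lemma pnorm_fst_le {p a b : ℝ} (hp : 0 < p) (ha : 0 ≤ a) (hb : 0 ≤ b) :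
    a ≤ (a ^ p + b ^ p) ^ (1 / p) := by
  have h1 : a = (a ^ p) ^ (1 / p) := by
    rw [one_div, Real.rpow_rpow_inv ha hp.ne']
  nth_rewrite 1 [h1]
  exact Real.rpow_le_rpow (Real.rpow_nonneg ha _)
    (le_add_of_nonneg_right (Real.rpow_nonneg hb _)) (by positivity)

lemma pnorm_snd_le {p a b : ℝ} (hp : 0 < p) (ha : 0 ≤ a) (hb : 0 ≤ b) :
    b ≤ (a ^ p + b ^ p) ^ (1 / p) := by
  have h1 : b = (b ^ p) ^ (1 / p) := by
    rw [one_div, Real.rpow_rpow_inv hb hp.ne']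
  nth_rewrite 1 [h1]
  exact Real.rpow_le_rpow (Real.rpow_nonneg hb _)
    (le_add_of_nonneg_left (Real.rpow_nonneg ha _)) (by positivity)

lemma pnorm_mono {p a b a' b' : ℝ} (hp : 0 ≤ p) (ha : 0 ≤ a) (hb : 0 ≤ b)
    (h1 : a ≤ a') (h2 : b ≤ b') :
    (a ^ p + b ^ p) ^ (1 / p) ≤ (a' ^ p + b' ^ p) ^ (1 / p) :=
  Real.rpow_le_rpow (add_nonneg (Real.rpow_nonneg ha _) (Real.rpow_nonneg hb _))
    (add_le_add (Real.rpow_le_rpow ha h1 hp) (Real.rpow_le_rpow hb h2 hp)) (by positivity)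

lemma pnorm_add_le {p : ℝ} (hp : 1 ≤ p) {a1 b1 a2 b2 : ℝ} (ha1 : 0 ≤ a1) (hb1 : 0 ≤ b1)
    (ha2 : 0 ≤ a2) (hb2 : 0 ≤ b2) :
    ((a1 + a2) ^ p + (b1 + b2) ^ p) ^ (1 / p) ≤
      (a1 ^ p + b1 ^ p) ^ (1 / p) + (a2 ^ p + b2 ^ p) ^ (1 / p) := by
  have h := Real.Lp_add_le_of_nonneg (s := (Finset.univ : Finset (Fin 2)))
    (f := ![a1, b1]) (g := ![a2, b2]) hp
    (by intro i _; fin_cases i <;> simpa) (by intro i _; fin_cases i <;> simpa)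
  simpa [Fin.sum_univ_two] using h

lemma pnorm_smul {p : ℝ} (hp : 0 < p) {r a b : ℝ} (hr : 0 ≤ r) (ha : 0 ≤ a) (hb : 0 ≤ b) :
    ((r * a) ^ p + (r * b) ^ p) ^ (1 / p) = r * (a ^ p + b ^ p) ^ (1 / p) := by
  rw [Real.mul_rpow hr ha, Real.mul_rpow hr hb, ← mul_add,
    Real.mul_rpow (Real.rpow_nonneg hr _)
      (add_nonneg (Real.rpow_nonneg ha _) (Real.rpow_nonneg hb _)),
    one_div, Real.rpow_rpow_inv hr hp.ne']

end RpowAux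

section SemVAux

variable {V : Submodule ℝ (StrongDual ℝ L)}

lemma semV_bddAbove (V : Submodule ℝ (StrongDual ℝ L)) (u : L) :
    BddAbove ((fun μ : StrongDual ℝ L => |μ u| / ‖μ‖) '' {μ : StrongDual ℝ L | μ ∈ V ∧ μ ≠ 0}) := by
  refine ⟨‖u‖, ?_⟩
  rintro t ⟨μ, ⟨-, hμ⟩, rfl⟩
  rw [div_le_iff₀ (norm_pos_iff.mpr hμ)]
  calc |μ u| = ‖μ u‖ := (Real.norm_eq_abs _).symm
    _ ≤ ‖μ‖ * ‖u‖ := μ.le_opNorm u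
    _ = ‖u‖ * ‖μ‖ := mul_comm _ _

lemma semV_nonneg (V : Submodule ℝ (StrongDual ℝ L)) (u : L) : 0 ≤ semV V u := by
  refine Real.sSup_nonneg ?_
  rintro t ⟨μ, ⟨-, hμ⟩, rfl⟩
  positivity

lemma apply_le_semV {μ : StrongDual ℝ L} (hμ : μ ∈ V) (u : L) : |μ u| ≤ semV V u * ‖μ‖ := by
  rcases eq_or_ne μ 0 with rfl | hne
  · simp
  · have hmem : |μ u| / ‖μ‖ ∈
        ((fun μ : StrongDual ℝ L => |μ u| / ‖μ‖) '' {μ : StrongDual ℝ L | μ ∈ V ∧ μ ≠ 0}) :=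
      Set.mem_image_of_mem _ ⟨hμ, hne⟩
    have h := le_csSup (semV_bddAbove V u) hmem
    exact (div_le_iff₀ (norm_pos_iff.mpr hne)).mp h

lemma semV_le_norm (V : Submodule ℝ (StrongDual ℝ L)) (u : L) : semV V u ≤ ‖u‖ := by
  refine Real.sSup_le ?_ (norm_nonneg u)
  rintro t ⟨μ, ⟨-, hμ⟩, rfl⟩
  rw [div_le_iff₀ (norm_pos_iff.mpr hμ)]
  calc |μ u| = ‖μ u‖ := (Real.norm_eq_abs _).symm
    _ ≤ ‖μ‖ * ‖u‖ := μ.le_opNorm u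
    _ = ‖u‖ * ‖μ‖ := mul_comm _ _

lemma semV_add (V : Submodule ℝ (StrongDual ℝ L)) (u v : L) :
    semV V (u + v) ≤ semV V u + semV V v := by
  refine Real.sSup_le ?_ (add_nonneg (semV_nonneg V u) (semV_nonneg V v))
  rintro t ⟨μ, ⟨hμ, hne⟩, rfl⟩
  rw [div_le_iff₀ (norm_pos_iff.mpr hne)]
  calc |μ (u + v)| ≤ |μ u| + |μ v| := by rw [map_add]; exact abs_add_le _ _
    _ ≤ semV V u * ‖μ‖ + semV V v * ‖μ‖ :=
      add_le_add (apply_le_semV hμ u) (apply_le_semV hμ v)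
    _ = (semV V u + semV V v) * ‖μ‖ := (add_mul _ _ _).symm

lemma semV_zero (V : Submodule ℝ (StrongDual ℝ L)) : semV V (0 : L) = 0 := by
  refine le_antisymm (Real.sSup_le ?_ le_rfl) (semV_nonneg V 0)
  rintro t ⟨μ, ⟨-, hμ⟩, rfl⟩
  simp

lemma semV_smul (V : Submodule ℝ (StrongDual ℝ L)) (c : ℝ) (u : L) :
    semV V (c • u) = |c| * semV V u := by
  have key : ∀ (c : ℝ) (u : L), semV V (c • u) ≤ |c| * semV V u := by
    intro c u
    refine Real.sSup_le ?_ (mul_nonneg (abs_nonneg c) (semV_nonneg V u))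
    rintro t ⟨μ, ⟨hμ, hne⟩, rfl⟩
    rw [div_le_iff₀ (norm_pos_iff.mpr hne)]
    calc |μ (c • u)| = |c| * |μ u| := by rw [map_smul, smul_eq_mul, abs_mul]
      _ ≤ |c| * (semV V u * ‖μ‖) :=
        mul_le_mul_of_nonneg_left (apply_le_semV hμ u) (abs_nonneg c)
      _ = |c| * semV V u * ‖μ‖ := by ring
  rcases eq_or_ne c 0 with rfl | hc
  · simp [semV_zero]
  · refine le_antisymm (key c u) ?_
    have h2 := key c⁻¹ (c • u)
    rw [inv_smul_smul₀ hc, abs_inv] at h2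
    calc |c| * semV V u ≤ |c| * (|c|⁻¹ * semV V (c • u)) :=
      mul_le_mul_of_nonneg_left h2 (abs_nonneg c)
      _ = semV V (c • u) := by
        field_simp

lemma semV_neg (V : Submodule ℝ (StrongDual ℝ L)) (u : L) : semV V (-u) = semV V u := by
  have := semV_smul V (-1) u
  simpa using this

lemma semV_eq_zero_of {u : L} (h : ∀ μ ∈ V, μ u = 0) : semV V u = 0 := by
  refine le_antisymm (Real.sSup_le ?_ le_rfl) (semV_nonneg V u)
  rintro t ⟨μ, ⟨hμ, -⟩, rfl⟩
  simp [h μ hμ]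

end SemVAux

/-- `IsWDpair W_G G φ w` says that `φ ∈ 𝐖_D` with `D φ = w`, i.e. the abstract Stokes formula
`⟨φ, G u⟩ + ⟨w, u⟩ = 0` holds for all `u ∈ W_G`. -/
def IsWDpair (WG : Submodule ℝ L) (G : ↥WG →ₗ[ℝ] Lv) (φ : StrongDual ℝ Lv) (w : StrongDual ℝ L) : Prop :=
  ∀ u : ↥WG, φ (G u) + w (u : L) = 0

/-- A gradient discretisation `𝒟 = (X_𝒟, P_𝒟, G_𝒟)`: a finite-dimensional real vector space
`X`, a function reconstruction `P : X → L` and a gradient reconstruction `Gd : X → Lv`, such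
that `v ↦ (|P v|_{L,V}^p + ‖Gd v‖^p)^{1/p}` is a norm on `X` (definiteness is the only
non-automatic condition). -/
structure GradDisc (L Lv : Type*) [NormedAddCommGroup L] [NormedSpace ℝ L]
    [NormedAddCommGroup Lv] [NormedSpace ℝ Lv]
    (V : Submodule ℝ (StrongDual ℝ L)) (p : ℝ) where
  X : Type
  [instAddCommGroup : AddCommGroup X]
  [instModule : Module ℝ X]
  [instFin : FiniteDimensional ℝ X]
  P : X →ₗ[ℝ] L
  Gd : X →ₗ[ℝ] Lv
  dnorm_definite : ∀ v : X, (semV V (P v) ^ p + ‖Gd v‖ ^ p) ^ (1 / p) = 0 → v = 0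

attribute [instance] GradDisc.instAddCommGroup GradDisc.instModule GradDisc.instFin

namespace GradDisc

variable {V : Submodule ℝ (StrongDual ℝ L)} {p : ℝ}

/-- The discrete norm `‖v‖_𝒟 = (|P_𝒟 v|_{L,V}^p + ‖G_𝒟 v‖_Lv^p)^{1/p}`. -/
noncomputable def dnorm (D : GradDisc L Lv V p) (v : D.X) : ℝ :=
  (semV V (D.P v) ^ p + ‖D.Gd v‖ ^ p) ^ (1 / p)

/-- `C_𝒟 = max_{v ≠ 0} ‖P_𝒟 v‖_L / ‖v‖_𝒟`. -/
noncomputable def CD (D : GradDisc L Lv V p) : ℝ :=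
  sSup ((fun v : D.X => ‖D.P v‖ / D.dnorm v) '' {v : D.X | v ≠ 0})

/-- `W_𝒟(φ) = sup_{u ≠ 0} |⟨φ, G_𝒟 u⟩ + ⟨D φ, P_𝒟 u⟩| / ‖u‖_𝒟`, where `w = D φ`. -/
noncomputable def WDdef (D : GradDisc L Lv V p) (φ : StrongDual ℝ Lv) (w : StrongDual ℝ L) : ℝ :=
  sSup ((fun u : D.X => |φ (D.Gd u) + w (D.P u)| / D.dnorm u) '' {u : D.X | u ≠ 0})

/-- `S_𝒟(φ) = min_v (‖P_𝒟 v − φ‖_L + ‖G_𝒟 v − G φ‖_Lv)`, where `gφ = G φ`. -/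
noncomputable def SDdef (D : GradDisc L Lv V p) (φ : L) (gφ : Lv) : ℝ :=
  sInf (Set.range fun v : D.X => ‖D.P v - φ‖ + ‖D.Gd v - gφ‖)

end GradDisc

/-- Coercivity of a sequence of gradient discretisations: `sup_m C_{𝒟_m} < ∞`. -/
def Coercive {V : Submodule ℝ (StrongDual ℝ L)} {p : ℝ} (D : ℕ → GradDisc L Lv V p) : Prop :=
  ∃ C : ℝ, ∀ m : ℕ, (D m).CD ≤ C

/-- Limit-conformity: `W_{𝒟_m}(φ) → 0` for every `φ ∈ 𝐖_D` (with `w = D φ`). -/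
def LimitConforming (WG : Submodule ℝ L) (G : ↥WG →ₗ[ℝ] Lv)
    {V : Submodule ℝ (StrongDual ℝ L)} {p : ℝ} (D : ℕ → GradDisc L Lv V p) : Prop :=
  ∀ (φ : StrongDual ℝ Lv) (w : StrongDual ℝ L), IsWDpair WG G φ w →
    Filter.Tendsto (fun m => (D m).WDdef φ w) Filter.atTop (𝓝 0)

/-- Consistency: `S_{𝒟_m}(φ) → 0` for every `φ ∈ W_G`. -/
def Consistent (WG : Submodule ℝ L) (G : ↥WG →ₗ[ℝ] Lv)
    {V : Submodule ℝ (StrongDual ℝ L)} {p : ℝ} (D : ℕ → GradDisc L Lv V p) : Prop :=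
  ∀ u : ↥WG, Filter.Tendsto (fun m => (D m).SDdef (u : L) (G u)) Filter.atTop (𝓝 0)

/-- Compactness: bounded discrete sequences have relatively compact reconstructions in `L`. -/
def CompactSeq {V : Submodule ℝ (StrongDual ℝ L)} {p : ℝ} (D : ℕ → GradDisc L Lv V p) : Prop :=
  ∀ u : (m : ℕ) → (D m).X, (∃ C : ℝ, ∀ m : ℕ, (D m).dnorm (u m) ≤ C) →
    IsCompact (closure (Set.range fun m => (D m).P (u m)))


namespace GradDisc

variable {V : Submodule ℝ (StrongDual ℝ L)} {p : ℝ}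

lemma dnorm_nonneg (D : GradDisc L Lv V p) (v : D.X) : 0 ≤ D.dnorm v :=
  pnorm_nonneg (semV_nonneg _ _) (norm_nonneg _)

lemma dnorm_zero (hp : 0 < p) (D : GradDisc L Lv V p) : D.dnorm (0 : D.X) = 0 := by
  unfold dnorm
  rw [map_zero, map_zero, semV_zero, norm_zero, Real.zero_rpow hp.ne', add_zero,
    Real.zero_rpow (one_div_ne_zero hp.ne')]

lemma semV_le_dnorm (hp : 0 < p) (D : GradDisc L Lv V p) (v : D.X) :
    semV V (D.P v) ≤ D.dnorm v :=
  pnorm_fst_le hp (semV_nonneg _ _) (norm_nonneg _)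

lemma norm_Gd_le_dnorm (hp : 0 < p) (D : GradDisc L Lv V p) (v : D.X) :
    ‖D.Gd v‖ ≤ D.dnorm v :=
  pnorm_snd_le hp (semV_nonneg _ _) (norm_nonneg _)

lemma dnorm_pos (D : GradDisc L Lv V p) {v : D.X} (hv : v ≠ 0) : 0 < D.dnorm v :=
  (D.dnorm_nonneg v).lt_of_ne (fun h => hv (D.dnorm_definite v h.symm))

lemma dnorm_add_le (hp : 1 ≤ p) (D : GradDisc L Lv V p) (v w : D.X) :
    D.dnorm (v + w) ≤ D.dnorm v + D.dnorm w := by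
  unfold dnorm
  rw [map_add, map_add]
  refine le_trans (pnorm_mono (le_trans zero_le_one hp) (semV_nonneg _ _) (norm_nonneg _)
    (semV_add _ _ _) (norm_add_le _ _)) ?_
  exact pnorm_add_le hp (semV_nonneg _ _) (norm_nonneg _) (semV_nonneg _ _) (norm_nonneg _)

lemma dnorm_smul (hp : 0 < p) (D : GradDisc L Lv V p) (c : ℝ) (v : D.X) :
    D.dnorm (c • v) = |c| * D.dnorm v := by
  unfold dnorm
  rw [map_smul, map_smul, semV_smul, norm_smul, Real.norm_eq_abs]
  exact pnorm_smul hp (abs_nonneg c) (semV_nonneg _ _) (norm_nonneg _)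

lemma WDdef_nonneg (D : GradDisc L Lv V p) (φ : StrongDual ℝ Lv) (w : StrongDual ℝ L) :
    0 ≤ D.WDdef φ w := by
  refine Real.sSup_nonneg ?_
  rintro t ⟨u, -, rfl⟩
  exact div_nonneg (abs_nonneg _) (GradDisc.dnorm_nonneg _ u)

lemma abs_pair_le (hp : 1 < p) (D : GradDisc L Lv V p) (φ : StrongDual ℝ Lv) (w : StrongDual ℝ L)
    (v : D.X) : |φ (D.Gd v) + w (D.P v)| ≤ D.WDdef φ w * D.dnorm v := by
  have hp0 : (0 : ℝ) < p := one_pos.trans hp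
  rcases eq_or_ne v 0 with rfl | hv
  · simp [dnorm_zero hp0]
  letI : NormedAddCommGroup D.X := AddGroupNorm.toNormedAddCommGroup
    { toFun := D.dnorm
      map_zero' := D.dnorm_zero hp0
      add_le' := D.dnorm_add_le hp.le
      neg' := fun u => by
        have := D.dnorm_smul hp0 (-1) u
        simpa using this
      eq_zero_of_map_eq_zero' := fun u h => D.dnorm_definite u h }
  letI : NormedSpace ℝ D.X :=
    { norm_smul_le := fun c u => le_of_eq (by
        rw [Real.norm_eq_abs]
        exact D.dnorm_smul hp0 c u) }
  let ℓ : D.X →ₗ[ℝ] ℝ := (w.toLinearMap.comp D.P) + (φ.toLinearMap.comp D.Gd)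
  let ℓc : D.X →L[ℝ] ℝ := LinearMap.toContinuousLinearMap ℓ
  have hnorm : ∀ u : D.X, ‖u‖ = D.dnorm u := fun _ => rfl
  have hℓ : ∀ u : D.X, |φ (D.Gd u) + w (D.P u)| ≤ ‖ℓc‖ * D.dnorm u := by
    intro u
    have h1 := ℓc.le_opNorm u
    rw [hnorm] at h1
    have h2 : ℓc u = w (D.P u) + φ (D.Gd u) := by
      simp [ℓc, ℓ]
    rw [h2, Real.norm_eq_abs] at h1
    calc |φ (D.Gd u) + w (D.P u)| = |w (D.P u) + φ (D.Gd u)| := by rw [add_comm]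
      _ ≤ ‖ℓc‖ * D.dnorm u := h1
  have hbdd : BddAbove ((fun u : D.X => |φ (D.Gd u) + w (D.P u)| / D.dnorm u) ''
      {u : D.X | u ≠ 0}) := by
    refine ⟨‖ℓc‖, ?_⟩
    rintro t ⟨u, hu, rfl⟩
    rw [div_le_iff₀ (D.dnorm_pos hu)]
    exact hℓ u
  have hmem : |φ (D.Gd v) + w (D.P v)| / D.dnorm v ∈
      ((fun u : D.X => |φ (D.Gd u) + w (D.P u)| / D.dnorm u) '' {u : D.X | u ≠ 0}) :=
    Set.mem_image_of_mem _ hv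
  have hle := le_csSup hbdd hmem
  exact (div_le_iff₀ (D.dnorm_pos hv)).mp hle

end GradDisc

section HBAux

lemma exists_dual_annihilator {E : Type*} [NormedAddCommGroup E] [NormedSpace ℝ E]
    (S : Submodule ℝ E) (hS : IsClosed (S : Set E)) {z : E} (hz : z ∉ S) :
    ∃ f : StrongDual ℝ E, (∀ y ∈ S, f y = 0) ∧ f z ≠ 0 := by
  obtain ⟨f, u, h1, h2⟩ := geometric_hahn_banach_closed_point (S.convex) hS hz
  have hu : 0 < u := by simpa using h1 0 S.zero_mem
  refine ⟨f, fun y hy => ?_, ?_⟩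
  · by_contra hne
    have hmem : ((u + 1) / f y) • y ∈ S := S.smul_mem _ hy
    have h3 := h1 _ hmem
    rw [map_smul, smul_eq_mul, div_mul_cancel₀ _ hne] at h3
    linarith
  · exact (hu.trans h2).ne'

lemma separableSpace_of_dual_separable {B : Type*} [NormedAddCommGroup B] [NormedSpace ℝ B]
    [TopologicalSpace.SeparableSpace (StrongDual ℝ B)] : TopologicalSpace.SeparableSpace B := by
  haveI : Nonempty (StrongDual ℝ B) := ⟨0⟩
  obtain ⟨f, hf⟩ := TopologicalSpace.exists_dense_seq (StrongDual ℝ B)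
  have hx : ∀ n, ∃ xx : B, ‖xx‖ ≤ 1 ∧ ‖f n‖ / 2 ≤ ‖(f n) xx‖ := by
    intro n
    rcases eq_or_ne (f n) 0 with h0 | hn
    · exact ⟨0, by simp, by simp [h0]⟩
    · have hlt : ‖f n‖ / 2 < ‖f n‖ := half_lt_self (norm_pos_iff.mpr hn)
      obtain ⟨xx, hx1, hx2⟩ := (f n).exists_lt_apply_of_lt_opNorm hlt
      exact ⟨xx, hx1.le, hx2.le⟩
  choose x hx1 hx2 using hx
  set S := (Submodule.span ℝ (Set.range x)).topologicalClosure with hSdef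
  have hSsep : TopologicalSpace.IsSeparable (S : Set B) := by
    have h1 : TopologicalSpace.IsSeparable
        ((Submodule.span ℝ (Set.range x) : Submodule ℝ B) : Set B) :=
      (Set.countable_range x).isSeparable.span
    have h2 := h1.closure
    rwa [hSdef, Submodule.topologicalClosure_coe]
  suffices hS : S = ⊤ by
    rw [← TopologicalSpace.isSeparable_univ_iff]
    have h3 : (S : Set B) = Set.univ := by rw [hS]; rfl
    rwa [h3] at hSsep
  by_contra hne
  obtain ⟨z, hz⟩ : ∃ z, z ∉ S := by
    by_contra hall
    push_neg at hall
    exact hne (Submodule.eq_top_iff'.mpr hall)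
  have hScl : IsClosed (S : Set B) := by
    rw [hSdef]; exact Submodule.isClosed_topologicalClosure _
  obtain ⟨F, hF0, hFz⟩ := exists_dual_annihilator S hScl hz
  have hFpos : 0 < ‖F‖ := norm_pos_iff.mpr (fun h => hFz (by simp [h]))
  obtain ⟨n, hn⟩ := Metric.denseRange_iff.mp hf F (‖F‖ / 4) (by positivity)
  have hxS : x n ∈ S :=
    Submodule.le_topologicalClosure _ (Submodule.subset_span (Set.mem_range_self n))
  have h0 : F (x n) = 0 := hF0 _ hxS
  have hdist : ‖F - f n‖ < ‖F‖ / 4 := by rwa [← dist_eq_norm]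
  have hfn : ‖F‖ - ‖F‖ / 4 ≤ ‖f n‖ := by
    have := norm_sub_norm_le (F) (f n)
    linarith [this.trans hdist.le]
  have hval : ‖(f n) (x n)‖ ≤ ‖F‖ / 4 := by
    have h1 : (f n) (x n) = ((f n - F) (x n)) := by
      simp [ContinuousLinearMap.sub_apply, h0]
    rw [h1]
    calc ‖(f n - F) (x n)‖ ≤ ‖f n - F‖ * ‖x n‖ := (f n - F).le_opNorm _
      _ ≤ ‖f n - F‖ * 1 := mul_le_mul_of_nonneg_left (hx1 n) (norm_nonneg _)
      _ = ‖F - f n‖ := by rw [mul_one, norm_sub_rev]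
      _ ≤ ‖F‖ / 4 := hdist.le
  have h5 := hx2 n
  linarith

end HBAux

section WeakStar

lemma exists_weakstar_subseq {B : Type*} [NormedAddCommGroup B] [NormedSpace ℝ B]
    [TopologicalSpace.SeparableSpace B]
    (ξ : ℕ → StrongDual ℝ B) {R : ℝ} (hR : ∀ m, ‖ξ m‖ ≤ R) :
    ∃ (Ξ : StrongDual ℝ B) (σ : ℕ → ℕ), StrictMono σ ∧
      ∀ g : B, Tendsto (fun k => ξ (σ k) g) atTop (𝓝 (Ξ g)) := by
  haveI : Nonempty B := ⟨0⟩
  have hR0 : 0 ≤ R := le_trans (norm_nonneg _) (hR 0)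
  obtain ⟨d, hd⟩ := TopologicalSpace.exists_dense_seq B
  set K : Set (ℕ → ℝ) := Set.univ.pi (fun n => Set.Icc (-(R * ‖d n‖)) (R * ‖d n‖)) with hK
  have hKc : IsCompact K := isCompact_univ_pi (fun n => isCompact_Icc)
  have happly : ∀ (m : ℕ) (b : B), |ξ m b| ≤ R * ‖b‖ := by
    intro m b
    calc |ξ m b| = ‖ξ m b‖ := (Real.norm_eq_abs _).symm
      _ ≤ ‖ξ m‖ * ‖b‖ := (ξ m).le_opNorm _
      _ ≤ R * ‖b‖ := mul_le_mul_of_nonneg_right (hR m) (norm_nonneg _)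
  have hmem : ∀ m, (fun n => ξ m (d n)) ∈ K := by
    intro m
    rw [hK, Set.mem_univ_pi]
    intro n
    exact Set.mem_Icc.mpr (abs_le.mp (happly m (d n)))
  obtain ⟨h, -, σ, hσ, hconv⟩ := hKc.tendsto_subseq hmem
  have hcoord : ∀ n, Tendsto (fun k => ξ (σ k) (d n)) atTop (𝓝 (h n)) := by
    rw [tendsto_pi_nhds] at hconv
    intro n
    exact hconv n
  have hcauchy : ∀ g : B, CauchySeq (fun k => ξ (σ k) g) := by
    intro g
    rw [Metric.cauchySeq_iff]
    intro ε hε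
    obtain ⟨n, hn⟩ := Metric.denseRange_iff.mp hd g (ε / (4 * (R + 1))) (by positivity)
    obtain ⟨N, hN⟩ := Metric.cauchySeq_iff.mp (hcoord n).cauchySeq (ε / 4) (by positivity)
    refine ⟨N, fun j hj k hk => ?_⟩
    have hend : ∀ i, dist (ξ (σ i) g) (ξ (σ i) (d n)) ≤ ε / 4 := by
      intro i
      rw [dist_eq_norm, ← map_sub, Real.norm_eq_abs]
      calc |ξ (σ i) (g - d n)| ≤ R * ‖g - d n‖ := happly _ _
        _ = R * dist g (d n) := by rw [dist_eq_norm]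
        _ ≤ R * (ε / (4 * (R + 1))) :=
          mul_le_mul_of_nonneg_left hn.le hR0
        _ ≤ ε / 4 := by
          rw [← mul_div_assoc]
          rw [div_le_div_iff₀ (by positivity) (by positivity)]
          nlinarith [hε.le]
    calc dist (ξ (σ j) g) (ξ (σ k) g) ≤
        dist (ξ (σ j) g) (ξ (σ j) (d n)) + dist (ξ (σ j) (d n)) (ξ (σ k) (d n)) +
          dist (ξ (σ k) (d n)) (ξ (σ k) g) := dist_triangle4 _ _ _ _
      _ < ε / 4 + ε / 4 + ε / 4 := by
        have h1 := hend j
        have h2 := hN j hj k hk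
        have h3 : dist (ξ (σ k) (d n)) (ξ (σ k) g) ≤ ε / 4 := by
          rw [dist_comm]; exact hend k
        linarith
      _ ≤ ε := by linarith
  have hlim : ∀ g : B, ∃ a : ℝ, Tendsto (fun k => ξ (σ k) g) atTop (𝓝 a) :=
    fun g => cauchySeq_tendsto_of_complete (hcauchy g)
  choose T hT using hlim
  have hTadd : ∀ g g' : B, T (g + g') = T g + T g' := by
    intro g g'
    refine tendsto_nhds_unique ?_ ((hT g).add (hT g'))
    have : (fun k => ξ (σ k) (g + g')) = fun k => ξ (σ k) g + ξ (σ k) g' := by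
      funext k; rw [map_add]
    rw [← this]
    exact hT (g + g')
  have hTsmul : ∀ (c : ℝ) (g : B), T (c • g) = c * T g := by
    intro c g
    refine tendsto_nhds_unique ?_ ((hT g).const_mul c)
    have : (fun k => ξ (σ k) (c • g)) = fun k => c * ξ (σ k) g := by
      funext k; rw [map_smul, smul_eq_mul]
    rw [← this]
    exact hT (c • g)
  let Tl : B →ₗ[ℝ] ℝ :=
    { toFun := T
      map_add' := hTadd
      map_smul' := hTsmul }
  have hbound : ∀ g : B, ‖Tl g‖ ≤ R * ‖g‖ := by
    intro g
    have h1 : Tendsto (fun k => ‖ξ (σ k) g‖) atTop (𝓝 ‖T g‖) := (hT g).norm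
    refine le_of_tendsto h1 (Filter.Eventually.of_forall fun k => ?_)
    rw [Real.norm_eq_abs]
    exact happly _ _
  refine ⟨LinearMap.mkContinuous Tl R hbound, σ, hσ, fun g => hT g⟩

end WeakStar

section Decomp

lemma exists_decomposition
    (hreflL : Function.Surjective ⇑(inclusionInDoubleDual ℝ L))
    (WG : Submodule ℝ L) (G : ↥WG →ₗ[ℝ] Lv) (p : ℝ) (hp : 1 < p)
    (V : Submodule ℝ (StrongDual ℝ L)) (hVclosed : IsClosed (V : Set (StrongDual ℝ L)))
    (CWGV : ℝ) (hCWGV : 0 < CWGV)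
    (hequiv : ∀ u : ↥WG, (‖(u : L)‖ ^ p + ‖G u‖ ^ p) ^ (1 / p) ≤
      CWGV * (semV V (u : L) ^ p + ‖G u‖ ^ p) ^ (1 / p))
    (g : StrongDual ℝ L) :
    ∃ (μ : StrongDual ℝ L) (φ : StrongDual ℝ Lv), μ ∈ V ∧ IsWDpair WG G φ (μ - g) := by
  have hp0 : (0 : ℝ) < p := one_pos.trans hp
  set c : ℝ := CWGV * ‖g‖ with hc
  have hc0 : 0 ≤ c := mul_nonneg hCWGV.le (norm_nonneg g)
  set N : L × Lv → ℝ := fun ab => c * (semV V ab.1 ^ p + ‖ab.2‖ ^ p) ^ (1 / p) with hN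
  set ι : ↥WG →ₗ[ℝ] L × Lv := WG.subtype.prod G with hι
  set Y : Submodule ℝ (L × Lv) := LinearMap.range ι with hY
  set F : ↥Y →ₗ[ℝ] ℝ := g.toLinearMap.comp ((LinearMap.fst ℝ L Lv).comp Y.subtype) with hF
  have hNhom : ∀ r : ℝ, 0 < r → ∀ ab : L × Lv, N (r • ab) = r * N ab := by
    intro r hr ab
    rw [hN]
    simp only [Prod.smul_fst, Prod.smul_snd]
    rw [semV_smul, norm_smul, Real.norm_eq_abs,
      pnorm_smul hp0 (abs_nonneg r) (semV_nonneg _ _) (norm_nonneg _), abs_of_pos hr]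
    ring
  have hNadd : ∀ ab cd : L × Lv, N (ab + cd) ≤ N ab + N cd := by
    intro ab cd
    rw [hN]
    simp only [Prod.fst_add, Prod.snd_add]
    have h1 := pnorm_mono hp0.le (semV_nonneg V (ab.1 + cd.1)) (norm_nonneg (ab.2 + cd.2))
      (semV_add V ab.1 cd.1) (norm_add_le ab.2 cd.2)
    have h2 := pnorm_add_le hp.le (semV_nonneg V ab.1) (norm_nonneg ab.2)
      (semV_nonneg V cd.1) (norm_nonneg cd.2)
    calc c * (semV V (ab.1 + cd.1) ^ p + ‖ab.2 + cd.2‖ ^ p) ^ (1 / p) ≤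
        c * ((semV V ab.1 + semV V cd.1) ^ p + (‖ab.2‖ + ‖cd.2‖) ^ p) ^ (1 / p) :=
        mul_le_mul_of_nonneg_left h1 hc0
      _ ≤ c * ((semV V ab.1 ^ p + ‖ab.2‖ ^ p) ^ (1 / p) +
          (semV V cd.1 ^ p + ‖cd.2‖ ^ p) ^ (1 / p)) := mul_le_mul_of_nonneg_left h2 hc0
      _ = _ := by ring
  have hfle : ∀ xx : ↥Y, F xx ≤ N (xx : L × Lv) := by
    rintro ⟨ab, hab⟩
    obtain ⟨u, hu⟩ := hab
    subst hu
    show g (u : L) ≤ N ((u : L), G u)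
    calc g (u : L) ≤ |g (u : L)| := le_abs_self _
      _ = ‖g (u : L)‖ := (Real.norm_eq_abs _).symm
      _ ≤ ‖g‖ * ‖(u : L)‖ := g.le_opNorm _
      _ ≤ ‖g‖ * (‖(u : L)‖ ^ p + ‖G u‖ ^ p) ^ (1 / p) :=
        mul_le_mul_of_nonneg_left (pnorm_fst_le hp0 (norm_nonneg _) (norm_nonneg _))
          (norm_nonneg g)
      _ ≤ ‖g‖ * (CWGV * (semV V (u : L) ^ p + ‖G u‖ ^ p) ^ (1 / p)) :=
        mul_le_mul_of_nonneg_left (hequiv u) (norm_nonneg g)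
      _ = N ((u : L), G u) := by rw [hN, hc]; ring
  obtain ⟨Ft, hFt1, hFt2⟩ := exists_extension_of_le_sublinear ⟨Y, F⟩ N hNhom hNadd hfle
  have hNfst : ∀ a : L, N (a, 0) = c * semV V a := by
    intro a
    rw [hN]
    simp only [norm_zero]
    rw [Real.zero_rpow hp0.ne', add_zero, one_div,
      Real.rpow_rpow_inv (semV_nonneg V a) hp0.ne']
  have hNsnd : ∀ b : Lv, N (0, b) = c * ‖b‖ := by
    intro b
    rw [hN]
    simp only [semV_zero]
    rw [Real.zero_rpow hp0.ne', zero_add, one_div,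
      Real.rpow_rpow_inv (norm_nonneg b) hp0.ne']
  set μlin : L →ₗ[ℝ] ℝ := Ft.comp (LinearMap.inl ℝ L Lv) with hμlin
  set ψlin : Lv →ₗ[ℝ] ℝ := Ft.comp (LinearMap.inr ℝ L Lv) with hψlin
  have hμle : ∀ a : L, |μlin a| ≤ c * semV V a := by
    intro a
    have h1 : Ft (a, 0) ≤ c * semV V a := by
      have := hFt2 (a, 0); rwa [hNfst a] at this
    have h2 : Ft (-a, 0) ≤ c * semV V a := by
      have := hFt2 (-a, 0); rwa [hNfst (-a), semV_neg] at this
    have h3 : ((-a : L), (0 : Lv)) = -((a : L), (0 : Lv)) := by simp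
    rw [h3, map_neg] at h2
    have h4 : μlin a = Ft (a, 0) := rfl
    rw [h4]
    exact abs_le.mpr ⟨by linarith, h1⟩
  have hψle : ∀ b : Lv, |ψlin b| ≤ c * ‖b‖ := by
    intro b
    have h1 : Ft (0, b) ≤ c * ‖b‖ := by
      have := hFt2 (0, b); rwa [hNsnd b] at this
    have h2 : Ft (0, -b) ≤ c * ‖b‖ := by
      have := hFt2 (0, -b); rwa [hNsnd (-b), norm_neg] at this
    have h3 : ((0 : L), (-b : Lv)) = -((0 : L), (b : Lv)) := by simp
    rw [h3, map_neg] at h2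
    have h4 : ψlin b = Ft (0, b) := rfl
    rw [h4]
    exact abs_le.mpr ⟨by linarith, h1⟩
  set μ : StrongDual ℝ L := LinearMap.mkContinuous μlin c (fun a => by
    rw [Real.norm_eq_abs]
    exact le_trans (hμle a) (mul_le_mul_of_nonneg_left (semV_le_norm V a) hc0)) with hμdef
  set φ : StrongDual ℝ Lv := LinearMap.mkContinuous ψlin c (fun b => by
    rw [Real.norm_eq_abs]; exact hψle b) with hφdef
  have happμ : ∀ a : L, μ a = Ft (a, 0) := fun a => rfl
  have happφ : ∀ b : Lv, φ b = Ft (0, b) := fun b => rfl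
  have hgraph : ∀ u : ↥WG, μ (u : L) + φ (G u) = g (u : L) := by
    intro u
    have hmem : ι u ∈ Y := LinearMap.mem_range_self _ u
    have h1 : Ft (ι u) = F ⟨ι u, hmem⟩ := hFt1 ⟨ι u, hmem⟩
    have h2 : F ⟨ι u, hmem⟩ = g (u : L) := rfl
    have hsplit : (ι u) = (((u : L), (0 : Lv)) + ((0 : L), G u)) := by
      have : ι u = ((u : L), G u) := rfl
      rw [this, Prod.mk_add_mk, add_zero, zero_add]
    rw [happμ, happφ, ← map_add, ← hsplit, h1, h2]
  have hμV : μ ∈ V := by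
    by_contra hμnV
    obtain ⟨Ξ, hΞ0, hΞμ⟩ := exists_dual_annihilator V hVclosed hμnV
    obtain ⟨x₀, hx₀⟩ := hreflL Ξ
    have hev : ∀ hh : StrongDual ℝ L, Ξ hh = hh x₀ := by
      intro hh; rw [← hx₀]; exact dual_def ℝ L x₀ hh
    have hsem : semV V x₀ = 0 := semV_eq_zero_of (fun ν hν => by
      have := hΞ0 ν hν; rwa [hev ν] at this)
    have hb : |μ x₀| ≤ c * semV V x₀ := hμle x₀
    rw [hsem, mul_zero] at hb
    have : μ x₀ = 0 := abs_nonneg _ |>.antisymm' hb |> abs_eq_zero.mp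
    exact hΞμ (by rw [hev μ]; exact this)
  refine ⟨μ, φ, hμV, fun u => ?_⟩
  have := hgraph u
  simp only [ContinuousLinearMap.sub_apply]
  linarith

end Decomp

set_option maxHeartbeats 2000000 in
theorem regularity_of_the_limit
    [CompleteSpace L] [CompleteSpace Lv]
    [TopologicalSpace.SeparableSpace L] [TopologicalSpace.SeparableSpace Lv]
    (hreflL : Function.Surjective ⇑(inclusionInDoubleDual ℝ L))
    (hreflLv : Function.Surjective ⇑(inclusionInDoubleDual ℝ Lv))
    (WG : Submodule ℝ L) (hWGdense : Dense (WG : Set L))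
    (G : ↥WG →ₗ[ℝ] Lv)
    (hGclosed : IsClosed (Set.range fun u : ↥WG => ((u : L), G u)))
    (p : ℝ) (hp : 1 < p)
    (V : Submodule ℝ (StrongDual ℝ L)) (hVclosed : IsClosed (V : Set (StrongDual ℝ L)))
    (CWGV : ℝ) (hCWGV : 0 < CWGV)
    (hequiv : ∀ u : ↥WG, (‖(u : L)‖ ^ p + ‖G u‖ ^ p) ^ (1 / p) ≤
      CWGV * (semV V (u : L) ^ p + ‖G u‖ ^ p) ^ (1 / p))
    (D : ℕ → GradDisc L Lv V p)
    (hlc : LimitConforming WG G D)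
    (um : (m : ℕ) → (D m).X)
    (hbd : ∃ C : ℝ, ∀ m : ℕ, (D m).dnorm (um m) ≤ C) :
    ∃ u : ↥WG, ∃ φ : ℕ → ℕ, StrictMono φ ∧
      (∀ g : StrongDual ℝ L,
        Tendsto (fun k => g ((D (φ k)).P (um (φ k)))) atTop (𝓝 (g (u : L)))) ∧
      (∀ g : StrongDual ℝ Lv,
        Tendsto (fun k => g ((D (φ k)).Gd (um (φ k)))) atTop (𝓝 (g (G u)))) := by
  classical
  have hp0 : (0 : ℝ) < p := one_pos.trans hp
  obtain ⟨C, hC⟩ := hbd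
  set C0 : ℝ := max C 0 with hC0def
  have hC0nn : (0 : ℝ) ≤ C0 := le_max_right _ _
  have hCd : ∀ m, (D m).dnorm (um m) ≤ C0 := fun m => (hC m).trans (le_max_left _ _)
  set x : ℕ → L := fun m => (D m).P (um m) with hxdef
  set y : ℕ → Lv := fun m => (D m).Gd (um m) with hydef
  have hyb : ∀ m, ‖y m‖ ≤ C0 := fun m => ((D m).norm_Gd_le_dnorm hp0 (um m)).trans (hCd m)
  have hxV : ∀ m, semV V (x m) ≤ C0 := fun m => ((D m).semV_le_dnorm hp0 (um m)).trans (hCd m)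
  set Zs : Submodule ℝ (StrongDual ℝ L × StrongDual ℝ Lv) :=
    { carrier := {z | IsWDpair WG G z.2 z.1}
      add_mem' := by
        intro a b ha hb u
        have h1 := ha u
        have h2 := hb u
        simp only [Prod.fst_add, Prod.snd_add, ContinuousLinearMap.add_apply]
        linarith
      zero_mem' := by intro u; simp
      smul_mem' := by
        intro cc a ha u
        have h1 := ha u
        simp only [Prod.smul_fst, Prod.smul_snd, ContinuousLinearMap.coe_smul',
          Pi.smul_apply, smul_eq_mul]
        linear_combination cc * h1 } with hZs
  have hZc : IsClosed (Zs : Set (StrongDual ℝ L × StrongDual ℝ Lv)) := by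
    have hset : (Zs : Set (StrongDual ℝ L × StrongDual ℝ Lv)) =
        ⋂ u : ↥WG, ((fun z : StrongDual ℝ L × StrongDual ℝ Lv => z.2 (G u) + z.1 (u : L)) ⁻¹' {0}) := by
      ext z
      simp only [Set.mem_iInter, Set.mem_preimage, Set.mem_singleton_iff]
      exact Iff.rfl
    rw [hset]
    refine isClosed_iInter fun u => ?_
    have hcont : Continuous fun z : StrongDual ℝ L × StrongDual ℝ Lv => z.2 (G u) + z.1 (u : L) :=
      (((ContinuousLinearMap.apply ℝ ℝ (G u)).continuous.comp continuous_snd).add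
        ((ContinuousLinearMap.apply ℝ ℝ ((u : L))).continuous.comp continuous_fst))
    exact isClosed_singleton.preimage hcont
  haveI : CompleteSpace ↥Zs := hZc.completeSpace_coe
  set T : ℕ → (↥Zs →L[ℝ] ℝ) := fun m =>
    (((ContinuousLinearMap.apply ℝ ℝ (y m)).comp
        (ContinuousLinearMap.snd ℝ (StrongDual ℝ L) (StrongDual ℝ Lv))) +
      ((ContinuousLinearMap.apply ℝ ℝ (x m)).comp
        (ContinuousLinearMap.fst ℝ (StrongDual ℝ L) (StrongDual ℝ Lv)))).comp Zs.subtypeL with hT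
  have hTapp : ∀ (m : ℕ) (z : ↥Zs),
      T m z = (z : StrongDual ℝ L × StrongDual ℝ Lv).2 (y m) + (z : StrongDual ℝ L × StrongDual ℝ Lv).1 (x m) := by
    intro m z
    simp [hT, ContinuousLinearMap.apply_apply]
  have hTptbd : ∀ z : ↥Zs, ∃ Cz, ∀ m, ‖T m z‖ ≤ Cz := by
    intro z
    have hzp : IsWDpair WG G (z : StrongDual ℝ L × StrongDual ℝ Lv).2 (z : StrongDual ℝ L × StrongDual ℝ Lv).1 := z.2
    obtain ⟨b, hb⟩ := (hlc _ _ hzp).bddAbove_range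
    have hb0 : (0 : ℝ) ≤ b :=
      le_trans ((D 0).WDdef_nonneg _ _) (hb (Set.mem_range_self 0))
    refine ⟨b * C0, fun m => ?_⟩
    rw [hTapp, Real.norm_eq_abs]
    calc |(z : StrongDual ℝ L × StrongDual ℝ Lv).2 (y m) + (z : StrongDual ℝ L × StrongDual ℝ Lv).1 (x m)| ≤
        (D m).WDdef (z : StrongDual ℝ L × StrongDual ℝ Lv).2 (z : StrongDual ℝ L × StrongDual ℝ Lv).1 *
          (D m).dnorm (um m) := (D m).abs_pair_le hp _ _ (um m)
      _ ≤ b * C0 := mul_le_mul (hb (Set.mem_range_self m)) (hCd m)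
          ((D m).dnorm_nonneg _) hb0
  obtain ⟨M, hM⟩ := banach_steinhaus (E := ↥Zs) (F := ℝ) (𝕜 := ℝ) (𝕜₂ := ℝ) (σ₁₂ := RingHom.id ℝ) (g := T) hTptbd
  have hTle : ∀ (m : ℕ) (z : ↥Zs), ‖T m z‖ ≤ M * ‖z‖ := fun m z =>
    le_trans (ContinuousLinearMap.le_opNorm (E := ↥Zs) (F := ℝ) (𝕜 := ℝ) (𝕜₂ := ℝ) (σ₁₂ := RingHom.id ℝ) (T m) z) (mul_le_mul_of_nonneg_right (hM m) (norm_nonneg z))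
  have hxpt : ∀ g : StrongDual ℝ L, ∃ Cg, ∀ m,
      ‖(inclusionInDoubleDual ℝ L) (x m) g‖ ≤ Cg := by
    intro g
    obtain ⟨μ, φ0, hμV, hpair0⟩ :=
      exists_decomposition hreflL WG G p hp V hVclosed CWGV hCWGV hequiv g
    have hzZ : ((μ - g, φ0) : StrongDual ℝ L × StrongDual ℝ Lv) ∈ Zs := hpair0
    set z : ↥Zs := ⟨(μ - g, φ0), hzZ⟩ with hzdef
    refine ⟨C0 * ‖μ‖ + ‖φ0‖ * C0 + M * ‖z‖, fun m => ?_⟩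
    have hd : (inclusionInDoubleDual ℝ L) (x m) g = g (x m) := dual_def ℝ L (x m) g
    rw [hd, Real.norm_eq_abs]
    have hsplit : g (x m) = μ (x m) + φ0 (y m) - (φ0 (y m) + (μ - g) (x m)) := by
      simp only [ContinuousLinearMap.sub_apply]; ring
    have h3 : |φ0 (y m) + (μ - g) (x m)| ≤ M * ‖z‖ := by
      have h4 := hTle m z
      rw [hTapp, Real.norm_eq_abs] at h4
      exact h4
    have e1 : |μ (x m)| ≤ C0 * ‖μ‖ :=
      (apply_le_semV hμV (x m)).trans (mul_le_mul_of_nonneg_right (hxV m) (norm_nonneg μ))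
    have e2 : |φ0 (y m)| ≤ ‖φ0‖ * C0 := by
      calc |φ0 (y m)| = ‖φ0 (y m)‖ := (Real.norm_eq_abs _).symm
        _ ≤ ‖φ0‖ * ‖y m‖ := φ0.le_opNorm _
        _ ≤ ‖φ0‖ * C0 := mul_le_mul_of_nonneg_left (hyb m) (norm_nonneg _)
    calc |g (x m)|
        ≤ |μ (x m)| + |φ0 (y m)| + |φ0 (y m) + (μ - g) (x m)| := by
          rw [hsplit]
          exact (abs_sub _ _).trans (add_le_add_left (abs_add_le _ _) _)
      _ ≤ C0 * ‖μ‖ + ‖φ0‖ * C0 + M * ‖z‖ := by linarith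
  obtain ⟨C2, hC2⟩ :=
    banach_steinhaus (g := fun m => (inclusionInDoubleDual ℝ L) (x m)) hxpt
  haveI hsep2L : TopologicalSpace.SeparableSpace (StrongDual ℝ (StrongDual ℝ L)) :=
    hreflL.denseRange.separableSpace (inclusionInDoubleDual ℝ L).continuous
  haveI : TopologicalSpace.SeparableSpace (StrongDual ℝ L) := separableSpace_of_dual_separable
  haveI hsep2Lv : TopologicalSpace.SeparableSpace (StrongDual ℝ (StrongDual ℝ Lv)) :=
    hreflLv.denseRange.separableSpace (inclusionInDoubleDual ℝ Lv).continuous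
  haveI : TopologicalSpace.SeparableSpace (StrongDual ℝ Lv) := separableSpace_of_dual_separable
  obtain ⟨Ξ, σ₁, hσ₁, hΞ⟩ := exists_weakstar_subseq
    (fun m => (inclusionInDoubleDual ℝ L) (x m)) (R := C2) hC2
  obtain ⟨xlim, hxlim⟩ := hreflL Ξ
  obtain ⟨Ε, σ₂, hσ₂, hΕ⟩ := exists_weakstar_subseq
    (fun k => (inclusionInDoubleDual ℝ Lv) (y (σ₁ k))) (R := C0)
    (fun k => le_trans (double_dual_bound ℝ Lv (y (σ₁ k))) (hyb (σ₁ k)))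
  obtain ⟨ylim, hylim⟩ := hreflLv Ε
  set σ : ℕ → ℕ := σ₁ ∘ σ₂ with hσdef
  have hσ : StrictMono σ := hσ₁.comp hσ₂
  have hxconv : ∀ g : StrongDual ℝ L, Tendsto (fun k => g (x (σ k))) atTop (𝓝 (g xlim)) := by
    intro g
    have h1 := (hΞ g).comp hσ₂.tendsto_atTop
    have h3 : Ξ g = g xlim := by rw [← hxlim]; exact dual_def ℝ L xlim g
    rw [h3] at h1
    exact h1.congr fun k => dual_def ℝ L (x (σ k)) g
  have hyconv : ∀ ψ : StrongDual ℝ Lv, Tendsto (fun k => ψ (y (σ k))) atTop (𝓝 (ψ ylim)) := by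
    intro ψ
    have h1 := hΕ ψ
    have h3 : Ε ψ = ψ ylim := by rw [← hylim]; exact dual_def ℝ Lv ylim ψ
    rw [h3] at h1
    exact h1.congr fun k => dual_def ℝ Lv (y (σ k)) ψ
  have hpairlim : ∀ (φ' : StrongDual ℝ Lv) (w : StrongDual ℝ L), IsWDpair WG G φ' w →
      φ' ylim + w xlim = 0 := by
    intro φ' w hzw
    have h1 : Tendsto (fun k => φ' (y (σ k)) + w (x (σ k))) atTop (𝓝 (φ' ylim + w xlim)) :=
      (hyconv φ').add (hxconv w)
    have h2 : Tendsto (fun k => φ' (y (σ k)) + w (x (σ k))) atTop (𝓝 0) := by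
      have hWD : Tendsto (fun k => (D (σ k)).WDdef φ' w * C0) atTop (𝓝 0) := by
        have h5 := ((hlc φ' w hzw).comp hσ.tendsto_atTop).mul_const C0
        simpa using h5
      refine squeeze_zero_norm (fun k => ?_) hWD
      rw [Real.norm_eq_abs]
      calc |φ' (y (σ k)) + w (x (σ k))| ≤
          (D (σ k)).WDdef φ' w * (D (σ k)).dnorm (um (σ k)) :=
            (D (σ k)).abs_pair_le hp φ' w (um (σ k))
        _ ≤ (D (σ k)).WDdef φ' w * C0 :=
          mul_le_mul_of_nonneg_left (hCd (σ k)) ((D (σ k)).WDdef_nonneg φ' w)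
    exact tendsto_nhds_unique h1 h2
  set ι : ↥WG →ₗ[ℝ] L × Lv := WG.subtype.prod G with hι
  set Y : Submodule ℝ (L × Lv) := LinearMap.range ι with hYdef
  have hYc : IsClosed (Y : Set (L × Lv)) := by
    have hset : (Y : Set (L × Lv)) = Set.range fun u : ↥WG => ((u : L), G u) := by
      rw [hYdef, LinearMap.coe_range]
      rfl
    rwa [hset]
  have hmemY : ((xlim, ylim) : L × Lv) ∈ Y := by
    by_contra hnot
    obtain ⟨f, hf0, hfz⟩ := exists_dual_annihilator Y hYc hnot
    set w' : StrongDual ℝ L := f.comp (ContinuousLinearMap.inl ℝ L Lv) with hw'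
    set φ' : StrongDual ℝ Lv := f.comp (ContinuousLinearMap.inr ℝ L Lv) with hφ'
    have hsum : ∀ ab : L × Lv, f ab = w' ab.1 + φ' ab.2 := by
      intro ab
      have hab : ab = ((ab.1, 0) + (0, ab.2) : L × Lv) := by simp
      rw [hw', hφ']
      simp only [ContinuousLinearMap.comp_apply, ContinuousLinearMap.inl_apply,
        ContinuousLinearMap.inr_apply]
      conv_lhs => rw [hab]
      rw [map_add]
    have hp' : IsWDpair WG G φ' w' := by
      intro u
      have hm : (((u : L), G u) : L × Lv) ∈ Y := ⟨u, rfl⟩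
      have h6 := hf0 _ hm
      rw [hsum (((u : L), G u))] at h6
      linarith
    have h0 := hpairlim φ' w' hp'
    apply hfz
    rw [hsum ((xlim, ylim))]
    linarith
  obtain ⟨u, hu⟩ := hmemY
  have hu' : (((u : L), G u) : L × Lv) = (xlim, ylim) := hu
  have hu1 : (u : L) = xlim := (Prod.ext_iff.mp hu').1
  have hu2 : G u = ylim := (Prod.ext_iff.mp hu').2
  refine ⟨u, σ, hσ, fun g => ?_, fun g => ?_⟩
  · rw [hu1]; exact hxconv g
  · rw [hu2]; exact hyconv g
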